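/- Let n ≥ 2 and X = (x₁,…,xₙ) with xᵢ ≥ 0. Then (n/(n−1))·Var(X^{1/2}) ≤ (1/n)Σ xᵢ − (Π xᵢ)^{1/n} ≤ n·Var(X^{1/2}). -/

import Mathlib

open Finset

lemma amgm_finset {ι : Type*} (s : Finset ι) (f : ι → ℝ)
    (hf : ∀ i ∈ s, 0 ≤ f i) (hs : s.Nonempty) :
    (s.card : ℝ) * (∏ i ∈ s, f i) ^ ((s.card : ℝ))⁻¹ ≤ ∑ i ∈ s, f i := by
  have hc : (0:ℝ) < s.card := by exact_mod_cast Finset.card_pos.mpr hs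
  have h := Real.geom_mean_le_arith_mean_weighted s (fun _ => (s.card:ℝ)⁻¹) f
    (fun i _ => by positivity) (by
      rw [Finset.sum_const, nsmul_eq_mul]
      field_simp) hf
  rw [Real.finset_prod_rpow s f hf] at h
  rw [← Finset.mul_sum] at h
  calc (s.card : ℝ) * (∏ i ∈ s, f i) ^ ((s.card : ℝ))⁻¹
      ≤ (s.card : ℝ) * ((s.card:ℝ)⁻¹ * ∑ i ∈ s, f i) := by
        apply mul_le_mul_of_nonneg_left h hc.le
    _ = ∑ i ∈ s, f i := by field_simp

lemma diag_eq_image {α : Type*} [DecidableEq α] (s : Finset α) :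
    s.diag = s.image (fun a => (a, a)) := by
  ext ⟨p, q⟩
  simp only [Finset.mem_diag, Finset.mem_image]
  constructor
  · rintro ⟨h1, h2⟩
    exact ⟨p, h1, by rw [h2]⟩
  · rintro ⟨a, ha, h⟩
    cases h
    exact ⟨ha, rfl⟩

lemma prod_diag'' {α : Type*} [DecidableEq α] (s : Finset α) (f : α × α → ℝ) :
    ∏ p ∈ s.diag, f p = ∏ i ∈ s, f (i, i) := by
  rw [diag_eq_image, Finset.prod_image (fun x _ y _ h => by simpa using h)]

lemma sum_diag'' {α : Type*} [DecidableEq α] (s : Finset α) (f : α × α → ℝ) :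
    ∑ p ∈ s.diag, f p = ∑ i ∈ s, f (i, i) := by
  rw [diag_eq_image, Finset.sum_image (fun x _ y _ h => by simpa using h)]

lemma kober_lower (n : ℕ) (hn : 2 ≤ n) (a : Fin n → ℝ) (ha : ∀ i, 0 ≤ a i) :
    (n:ℝ) * ((n:ℝ) - 1) * (∏ i, a i) ^ ((2:ℝ) / n) ≤ (∑ i, a i) ^ 2 - ∑ i, (a i) ^ 2 := by
  have hn0 : (0:ℝ) < n := by positivity
  have hP0 : 0 ≤ ∏ i, a i := Finset.prod_nonneg (fun i _ => ha i)
  have hQS : ∑ i, (a i) ^ 2 ≤ (∑ i, a i) ^ 2 := by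
    rw [sq (∑ i, a i), Finset.mul_sum]
    apply Finset.sum_le_sum
    intro i _
    rw [sq, mul_comm (∑ j, a j) (a i)]
    exact mul_le_mul_of_nonneg_left
      (Finset.single_le_sum (fun j _ => ha j) (Finset.mem_univ i)) (ha i)
  rcases eq_or_lt_of_le hP0 with hP | hP
  · rw [← hP, Real.zero_rpow (by positivity), mul_zero]
    linarith
  have hPne : (∏ i, a i) ≠ 0 := ne_of_gt hP
  set D := (Finset.univ : Finset (Fin n)).offDiag with hD
  have hcardD : D.card = n * n - n := by
    rw [hD, Finset.offDiag_card]
    simp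
  have hnlt : n < n * n := by nlinarith [hn]
  have hDne : D.Nonempty := Finset.card_pos.mp (by rw [hcardD]; omega)
  have hf0 : ∀ p ∈ D, 0 ≤ a p.1 * a p.2 := fun p _ => mul_nonneg (ha p.1) (ha p.2)
  have hA : ∏ p ∈ (Finset.univ : Finset (Fin n)) ×ˢ Finset.univ, a p.1 * a p.2
      = (∏ i, a i) ^ (n + n) := by
    rw [Finset.prod_product]
    have h1 : ∀ x : Fin n, ∏ y, (a x * a y) = a x ^ n * ∏ i, a i := fun x => by
      rw [Finset.prod_mul_distrib, Finset.prod_const, Finset.card_univ, Fintype.card_fin]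
    simp_rw [h1]
    rw [Finset.prod_mul_distrib, Finset.prod_pow, Finset.prod_const, Finset.card_univ,
      Fintype.card_fin, ← pow_add]
  have hB : ∏ p ∈ (Finset.univ : Finset (Fin n)) ×ˢ Finset.univ, a p.1 * a p.2
      = (∏ i, a i) ^ 2 * ∏ p ∈ D, a p.1 * a p.2 := by
    rw [← Finset.diag_union_offDiag (Finset.univ : Finset (Fin n)),
      Finset.prod_union (Finset.disjoint_diag_offDiag _), prod_diag'', ← hD]
    congr 1
    calc ∏ i, (a i * a i) = ∏ i, (a i) ^ 2 := by simp [sq]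
      _ = (∏ i, a i) ^ 2 := Finset.prod_pow _ _ _
  have hprodD : ∏ p ∈ D, a p.1 * a p.2 = (∏ i, a i) ^ (2 * n - 2) := by
    apply mul_left_cancel₀ (pow_ne_zero 2 hPne)
    rw [← hB, ← pow_add, show 2 + (2 * n - 2) = n + n by omega, hA]
  have hsum_split : (∑ i, a i) ^ 2 = (∑ i, (a i) ^ 2) + ∑ p ∈ D, a p.1 * a p.2 := by
    have hA' : ∑ p ∈ (Finset.univ : Finset (Fin n)) ×ˢ Finset.univ, a p.1 * a p.2
        = (∑ i, a i) ^ 2 := by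
      rw [Finset.sum_product, sq]
      simp_rw [← Finset.mul_sum]
      rw [← Finset.sum_mul]
    rw [← hA', ← Finset.diag_union_offDiag (Finset.univ : Finset (Fin n)),
      Finset.sum_union (Finset.disjoint_diag_offDiag _), sum_diag'', ← hD]
    congr 1
    apply Finset.sum_congr rfl
    intro i _
    rw [sq]
  have hamgm := amgm_finset D (fun p => a p.1 * a p.2) hf0 hDne
  rw [hprodD, hcardD] at hamgm
  have hexp : ((∏ i, a i) ^ (2 * n - 2)) ^ (((n * n - n : ℕ):ℝ))⁻¹
      = (∏ i, a i) ^ ((2:ℝ) / n) := by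
    rw [← Real.rpow_natCast (∏ i, a i) (2 * n - 2), ← Real.rpow_mul hP0]
    congr 1
    have h1 : ((2 * n - 2 : ℕ) : ℝ) = 2 * (n:ℝ) - 2 := by
      have h : (2:ℕ) ≤ 2 * n := by omega
      push_cast [Nat.cast_sub h]
      ring
    have h2 : ((n * n - n : ℕ) : ℝ) = (n:ℝ) * n - n := by
      push_cast [Nat.cast_sub hnlt.le]
      ring
    rw [h1, h2]
    have hne1 : (n:ℝ) * n - n ≠ 0 := by nlinarith [hn0, show (2:ℝ) ≤ n from by exact_mod_cast hn]
    field_simp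
    have hne2 : (n:ℝ) - 1 ≠ 0 := by linarith [show (2:ℝ) ≤ n from by exact_mod_cast hn]
    field_simp
  rw [hexp] at hamgm
  have hcast : ((n * n - n : ℕ) : ℝ) = (n:ℝ) * ((n:ℝ) - 1) := by
    push_cast [Nat.cast_sub hnlt.le]
    ring
  rw [hcast] at hamgm
  linarith [hamgm, hsum_split.ge]
lemma kober_upper {ι : Type*} [DecidableEq ι] :
    ∀ (n : ℕ) (s : Finset ι) (a : ι → ℝ), s.card = n → (∀ i ∈ s, 0 ≤ a i) →
    (∑ i ∈ s, a i) ^ 2 ≤ ((n:ℝ) - 1) * ∑ i ∈ s, (a i) ^ 2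
      + (n:ℝ) * (∏ i ∈ s, a i) ^ ((2:ℝ) / n) := by
  intro n
  induction n with
  | zero =>
    intro s a hcard _
    rw [Finset.card_eq_zero] at hcard
    subst hcard
    simp
  | succ m ih =>
    intro s a hcard ha
    have hne : s.Nonempty := Finset.card_pos.mp (by omega)
    obtain ⟨i₀, hi₀, hmin⟩ := Finset.exists_min_image s a hne
    have ht0 : 0 ≤ a i₀ := ha i₀ hi₀
    have hcard' : (s.erase i₀).card = m := by
      rw [Finset.card_erase_of_mem hi₀, hcard]
      omega
    have ha' : ∀ i ∈ s.erase i₀, 0 ≤ a i := fun i hi => ha i (Finset.mem_of_mem_erase hi)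
    have hsum : ∑ i ∈ s, a i = a i₀ + ∑ i ∈ s.erase i₀, a i :=
      (Finset.add_sum_erase s a hi₀).symm
    have hsumsq : ∑ i ∈ s, a i ^ 2 = a i₀ ^ 2 + ∑ i ∈ s.erase i₀, a i ^ 2 :=
      (Finset.add_sum_erase s (fun i => a i ^ 2) hi₀).symm
    have hprod : ∏ i ∈ s, a i = a i₀ * ∏ i ∈ s.erase i₀, a i :=
      (Finset.mul_prod_erase s a hi₀).symm
    rcases Nat.eq_zero_or_pos m with hm | hm
    · -- base-ish case : s = {i₀}
      subst hm
      have hs'e : s.erase i₀ = ∅ := Finset.card_eq_zero.mp hcard'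
      rw [hsum, hsumsq, hprod, hs'e]
      simp only [Finset.sum_empty, Finset.prod_empty, add_zero, mul_one]
      norm_num
    · -- main case, m ≥ 1
      have hM0 : (0:ℝ) < (m:ℝ) := by exact_mod_cast hm
      have hM1 : (1:ℝ) ≤ (m:ℝ) := by exact_mod_cast hm
      set t := a i₀ with ht
      set S := ∑ i ∈ s.erase i₀, a i with hS
      set Q := ∑ i ∈ s.erase i₀, a i ^ 2 with hQ
      set P := ∏ i ∈ s.erase i₀, a i with hP
      have hP0 : 0 ≤ P := Finset.prod_nonneg ha'
      set g : ℝ := P ^ ((m:ℝ))⁻¹ with hg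
      have hg0 : 0 ≤ g := Real.rpow_nonneg hP0 _
      have hgP : g ^ m = P := Real.rpow_inv_natCast_pow hP0 (by omega)
      have hamgm : (m:ℝ) * g ≤ S := by
        have := amgm_finset (s.erase i₀) a ha' (Finset.card_pos.mp (by omega))
        rwa [hcard'] at this
      have htg : t ≤ g := by
        have h1 : t ^ m ≤ g ^ m := by
          rw [hgP]
          calc t ^ m = ∏ _i ∈ s.erase i₀, t := by rw [Finset.prod_const, hcard']
            _ ≤ P := Finset.prod_le_prod (fun i _ => ht0)
                (fun i hi => hmin i (Finset.mem_of_mem_erase hi))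
        exact le_of_pow_le_pow_left₀ (by omega) hg0 h1
      have hCS : (∑ i ∈ s.erase i₀, (a i - t)) ^ 2 ≤ (m:ℝ) * ∑ i ∈ s.erase i₀, (a i - t) ^ 2 := by
        have := sq_sum_le_card_mul_sum_sq (s := s.erase i₀) (f := fun i => a i - t)
        rwa [hcard'] at this
      have hsub1 : ∑ i ∈ s.erase i₀, (a i - t) = S - (m:ℝ) * t := by
        rw [Finset.sum_sub_distrib, Finset.sum_const, hcard', nsmul_eq_mul]
      have hsub2 : ∑ i ∈ s.erase i₀, (a i - t) ^ 2 = Q - 2 * t * S + (m:ℝ) * t ^ 2 := by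
        have he : ∀ i, (a i - t) ^ 2 = a i ^ 2 - 2 * t * a i + t ^ 2 := fun i => by ring
        simp_rw [he]
        rw [Finset.sum_add_distrib, Finset.sum_sub_distrib, ← Finset.mul_sum,
          Finset.sum_const, hcard', nsmul_eq_mul]
      rw [hsub1, hsub2] at hCS
      set R : ℝ := (t * P) ^ ((2:ℝ) / ((m:ℝ) + 1)) with hR
      have hR0 : 0 ≤ R := Real.rpow_nonneg (mul_nonneg ht0 hP0) _
      clear_value t S Q P g R
      have hK : 2 * (m:ℝ) * (g * t) ≤ ((m:ℝ) + 1) * R + ((m:ℝ) - 1) * t ^ 2 := by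
        have hw1 : (0:ℝ) ≤ ((m:ℝ) + 1) / (2 * m) := by positivity
        have hw2 : (0:ℝ) ≤ ((m:ℝ) - 1) / (2 * m) := by
          apply div_nonneg (by linarith) (by positivity)
        have hsumw : ((m:ℝ) + 1) / (2 * m) + ((m:ℝ) - 1) / (2 * m) = 1 := by
          field_simp
          ring
        have h := Real.geom_mean_le_arith_mean2_weighted hw1 hw2 hR0 (sq_nonneg t) hsumw
        have hLHS : R ^ (((m:ℝ) + 1) / (2 * m)) * (t ^ 2) ^ (((m:ℝ) - 1) / (2 * m)) = g * t := by
          have e1 : (2:ℝ) / ((m:ℝ) + 1) * (((m:ℝ) + 1) / (2 * m)) = ((m:ℝ))⁻¹ := by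
            field_simp
          have e2 : R ^ (((m:ℝ) + 1) / (2 * m)) = t ^ ((m:ℝ))⁻¹ * g := by
            rw [hR, ← Real.rpow_mul (mul_nonneg ht0 hP0), e1,
              Real.mul_rpow ht0 hP0, hg]
          have e3 : ((t:ℝ) ^ 2) ^ (((m:ℝ) - 1) / (2 * m)) = t ^ (((m:ℝ) - 1) / m) := by
            rw [← Real.rpow_natCast t 2, ← Real.rpow_mul ht0]
            congr 1
            push_cast
            field_simp
          have e4 : ((m:ℝ))⁻¹ + ((m:ℝ) - 1) / m = 1 := by field_simp; ring
          rw [e2, e3, mul_comm (t ^ ((m:ℝ))⁻¹) g, mul_assoc,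
            ← Real.rpow_add' ht0 (by rw [e4]; norm_num), e4, Real.rpow_one]
        rw [hLHS] at h
        have h2 := mul_le_mul_of_nonneg_left h (by positivity : (0:ℝ) ≤ 2 * m)
        calc 2 * (m:ℝ) * (g * t)
            ≤ 2 * (m:ℝ) * (((m:ℝ) + 1) / (2 * m) * R + ((m:ℝ) - 1) / (2 * m) * t ^ 2) := h2
          _ = ((m:ℝ) + 1) * R + ((m:ℝ) - 1) * t ^ 2 := by
              field_simp
              try ring
      have hIH := ih (s.erase i₀) a hcard' ha'
      rw [← hS, ← hQ, ← hP] at hIH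
      have hPg : P ^ ((2:ℝ) / (m:ℝ)) = g ^ 2 := by
        rw [show (2:ℝ) / (m:ℝ) = ((m:ℝ))⁻¹ * 2 by ring, Real.rpow_mul hP0, hg,
          show ((2:ℝ)) = ((2:ℕ):ℝ) by norm_num, Real.rpow_natCast]
      rw [hPg] at hIH
      have h3sq : ((m:ℝ) * (g - t)) ^ 2 ≤ (S - (m:ℝ) * t) ^ 2 := by
        have hnn : 0 ≤ (m:ℝ) * (g - t) := mul_nonneg hM0.le (by linarith)
        have hle : (m:ℝ) * (g - t) ≤ S - (m:ℝ) * t := by nlinarith [hamgm]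
        exact pow_le_pow_left₀ hnn hle 2
      have h7 : (m:ℝ) * (g - t) ^ 2 ≤ Q - 2 * t * S + (m:ℝ) * t ^ 2 := by
        have h6 : (m:ℝ) * ((m:ℝ) * (g - t) ^ 2) ≤ (m:ℝ) * (Q - 2 * t * S + (m:ℝ) * t ^ 2) := by
          nlinarith [h3sq, hCS]
        exact le_of_mul_le_mul_left h6 hM0
      rw [hsum, hsumsq, hprod]
      push_cast
      rw [← hR]
      linarith [hIH, h7, hK]

theorem equal_weight_variance_bounds (n : ℕ) (hn : 2 ≤ n)
    (x : Fin n → ℝ) (hx : ∀ i, 0 ≤ x i) :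
    ((n : ℝ) / (n - 1)) *
        ((1 / n) * ∑ i, x i - ((1 / n) * ∑ i, Real.sqrt (x i)) ^ 2) ≤
      (1 / n) * ∑ i, x i - (∏ i, x i) ^ ((1 : ℝ) / n) ∧
    (1 / n) * ∑ i, x i - (∏ i, x i) ^ ((1 : ℝ) / n) ≤
      (n : ℝ) * ((1 / n) * ∑ i, x i - ((1 / n) * ∑ i, Real.sqrt (x i)) ^ 2) := by
  have ha0 : ∀ i, 0 ≤ Real.sqrt (x i) := fun i => Real.sqrt_nonneg _
  have hsq : ∀ i, Real.sqrt (x i) ^ 2 = x i := fun i => Real.sq_sqrt (hx i)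
  have hsum : ∑ i, x i = ∑ i, Real.sqrt (x i) ^ 2 :=
    Finset.sum_congr rfl (fun i _ => (hsq i).symm)
  have hprodnn : 0 ≤ ∏ i, Real.sqrt (x i) := Finset.prod_nonneg (fun i _ => ha0 i)
  have hprod : ∏ i, x i = (∏ i, Real.sqrt (x i)) ^ 2 := by
    rw [← Finset.prod_pow]
    exact Finset.prod_congr rfl (fun i _ => (hsq i).symm)
  have hGeq : (∏ i, x i) ^ ((1:ℝ)/n) = (∏ i, Real.sqrt (x i)) ^ ((2:ℝ)/n) := by
    rw [hprod, ← Real.rpow_natCast (∏ i, Real.sqrt (x i)) 2, ← Real.rpow_mul hprodnn]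
    congr 1
    push_cast
    ring
  have hupper := kober_upper n (Finset.univ : Finset (Fin n)) (fun i => Real.sqrt (x i))
    (by simp) (fun i _ => ha0 i)
  have hlower := kober_lower n hn (fun i => Real.sqrt (x i)) ha0
  have hup : (∑ i, Real.sqrt (x i)) ^ 2
      ≤ ((n:ℝ) - 1) * ∑ i, x i + (n:ℝ) * (∏ i, x i) ^ ((1:ℝ)/n) := by
    rw [hGeq, hsum]
    exact hupper
  have hlo : (n:ℝ) * ((n:ℝ) - 1) * (∏ i, x i) ^ ((1:ℝ)/n)
      ≤ (∑ i, Real.sqrt (x i)) ^ 2 - ∑ i, x i := by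
    rw [hGeq, hsum]
    exact hlower
  set S := ∑ i, Real.sqrt (x i) with hS
  set Q := ∑ i, x i with hQ
  set G := (∏ i, x i) ^ ((1:ℝ)/n) with hG
  clear_value S Q G
  have hn0 : (0:ℝ) < n := by positivity
  have hn1 : (0:ℝ) < (n:ℝ) - 1 := by
    have : (2:ℝ) ≤ n := by exact_mod_cast hn
    linarith
  have e1 : (1:ℝ)/n * Q - ((1:ℝ)/n * S) ^ 2 = ((n:ℝ) * Q - S ^ 2) / (n:ℝ)^2 := by
    field_simp
  have e2 : (1:ℝ)/n * Q - G = (Q - (n:ℝ) * G) / n := by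
    field_simp
  constructor
  · rw [e1, e2, div_mul_div_comm, div_le_div_iff₀ (by positivity) hn0]
    nlinarith [mul_le_mul_of_nonneg_left hlo (by positivity : (0:ℝ) ≤ (n:ℝ)^2)]
  · rw [e1, e2, mul_div_assoc']
    rw [div_le_div_iff₀ hn0 (by positivity)]
    nlinarith [mul_le_mul_of_nonneg_left hup (by positivity : (0:ℝ) ≤ (n:ℝ)^2)]
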